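/- Let κ be an infinite cardinal with κ^{<κ} = κ. Then any two κ-lattice partial orders of size κ in which every condition has two incompatible extensions, which are <κ-closed and in which every decreasing sequence of length <κ has a greatest lower bound, and which are atomless and separative, contain dense subsets order-isomorphic to the tree κ^{<κ} ordered by reverse extension. In particular, such a partial order is forcing-equivalent to Add(κ,1) = κ^{<κ}. -/

import Mathlib

open Cardinal

/-- The tree `κ^{<κ}`: functions `s : α → κ` for `α < κ`, represented as partial
functions on a well-order of type `κ` whose domain is a proper initial segment. -/
def KTree (κ : Cardinal) : Type :=
  {f : κ.ord.ToType → Option κ.ord.ToType // ∃ a : κ.ord.ToType, ∀ x, (f x).isSome ↔ x < a}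

/-- Reverse extension on `κ^{<κ}`: `s ≤ t` iff `s` extends `t`. -/
def KTreeLe {κ : Cardinal} (s t : KTree κ) : Prop :=
  ∀ x, (t.1 x).isSome → s.1 x = t.1 x

/-- Two conditions are compatible if they have a common lower bound. -/
def Compat {P : Type} [PartialOrder P] (p q : P) : Prop := ∃ r, r ≤ p ∧ r ≤ q

set_option linter.unusedVariables false

namespace KTAux

variable {κ : Cardinal} {P : Type} [PartialOrder P]

/-- Bundle of the hypotheses actually used in the construction. -/
structure Ctx (κ : Cardinal) (P : Type) [PartialOrder P] : Prop where
  hκ : ℵ₀ ≤ κ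
  hcard : #P = κ
  hlat : ∀ S : Set P, #S < κ → (∀ p ∈ S, ∀ q ∈ S, Compat p q) → ∃ g : P, IsGLB S g
  hatomless : ∀ p : P, ∃ q r : P, q ≤ p ∧ r ≤ p ∧ ¬ Compat q r

theorem compat_refl (p : P) : Compat p p := ⟨p, le_refl _, le_refl _⟩

theorem compat_symm {p q : P} (h : Compat p q) : Compat q p :=
  ⟨h.choose, h.choose_spec.2, h.choose_spec.1⟩

theorem compat_mono {p q p' q' : P} (h : Compat p q) (h1 : p ≤ p') (h2 : q ≤ q') :
    Compat p' q' := ⟨h.choose, h.choose_spec.1.trans h1, h.choose_spec.2.trans h2⟩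

theorem nonemptyB (c : Ctx κ P) : Nonempty κ.ord.ToType :=
  Ordinal.toType_nonempty_iff_ne_zero.2 (Cardinal.isSuccLimit_ord c.hκ).pos.ne'

theorem nonemptyP (c : Ctx κ P) : Nonempty P := by
  rw [← Cardinal.mk_ne_zero_iff, c.hcard]
  exact (aleph0_pos.trans_le c.hκ).ne'

theorem mk_B (c : Ctx κ P) : #(κ.ord.ToType) = κ := by
  rw [Cardinal.mk_toType, card_ord]

theorem mk_Iio_lt (c : Ctx κ P) (a : κ.ord.ToType) : #{x : κ.ord.ToType // x < a} < κ :=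
  Cardinal.mk_Iio_ord_toType a

theorem nontrivialB (c : Ctx κ P) : Nontrivial κ.ord.ToType := by
  rw [← Cardinal.one_lt_iff_nontrivial, mk_B c]
  exact lt_of_lt_of_le one_lt_aleph0 c.hκ

theorem exists_top (c : Ctx κ P) : ∃ t : P, ∀ p : P, p ≤ t := by
  obtain ⟨g, hg⟩ := c.hlat ∅ (by simp [aleph0_pos.trans_le c.hκ]) (by simp)
  exact ⟨g, fun p => hg.2 (by simp [lowerBounds])⟩


open scoped Classical in
noncomputable def glbS (c : Ctx κ P) (S : Set P) : P :=
  if h : #S < κ ∧ (∀ p ∈ S, ∀ q ∈ S, Compat p q) then (c.hlat S h.1 h.2).choose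
  else Classical.choice (nonemptyP c)

open scoped Classical in
theorem glbS_spec (c : Ctx κ P) {S : Set P} (h1 : #S < κ)
    (h2 : ∀ p ∈ S, ∀ q ∈ S, Compat p q) : IsGLB S (glbS c S) := by
  rw [glbS, dif_pos ⟨h1, h2⟩]
  exact (c.hlat S h1 h2).choose_spec

noncomputable def split1 (c : Ctx κ P) (p : P) : P := (c.hatomless p).choose

noncomputable def split2 (c : Ctx κ P) (p : P) : P :=
  (c.hatomless p).choose_spec.choose

theorem split1_le (c : Ctx κ P) (p : P) : split1 c p ≤ p :=
  (c.hatomless p).choose_spec.choose_spec.1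

theorem split2_le (c : Ctx κ P) (p : P) : split2 c p ≤ p :=
  (c.hatomless p).choose_spec.choose_spec.2.1

theorem split_incompat (c : Ctx κ P) (p : P) : ¬ Compat (split1 c p) (split2 c p) :=
  (c.hatomless p).choose_spec.choose_spec.2.2


theorem mk_small (c : Ctx κ P) {a : κ.ord.ToType} (f : {x : κ.ord.ToType // x < a} → P)
    (p : P) : #(insert p (Set.range f) : Set P) < κ :=
  lt_of_le_of_lt Cardinal.mk_insert_le
    (Cardinal.add_lt_of_lt c.hκ (lt_of_le_of_lt Cardinal.mk_range_le (mk_Iio_lt c a))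
      (one_lt_aleph0.trans_le c.hκ))

noncomputable def dseq (c : Ctx κ P) (p : P) : κ.ord.ToType → P :=
  WellFounded.fix wellFounded_lt (fun a IH =>
    glbS c (insert p (Set.range (fun b : {x // x < a} => split2 c (IH b.1 b.2)))))

theorem dseq_eq (c : Ctx κ P) (p : P) (a : κ.ord.ToType) :
    dseq c p a =
      glbS c (insert p (Set.range (fun b : {x // x < a} => split2 c (dseq c p b.1)))) :=
  WellFounded.fix_eq _ _ _

theorem dseq_spec (c : Ctx κ P) (p : P) :
    ∀ a, dseq c p a ≤ p ∧ ∀ b, b < a → dseq c p a ≤ split2 c (dseq c p b) := by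
  intro a
  induction a using WellFoundedLT.induction with
  | _ a IH =>
    have hglb : IsGLB (insert p (Set.range (fun b : {x // x < a} => split2 c (dseq c p b.1))))
        (dseq c p a) := by
      rw [dseq_eq]
      apply glbS_spec c (mk_small c _ p)
      rintro x hx y hy
      rcases Set.mem_insert_iff.1 hx with hx1 | ⟨⟨b1, hb1⟩, rfl⟩
      · rcases Set.mem_insert_iff.1 hy with hy1 | ⟨⟨b2, hb2⟩, rfl⟩
        · rw [hx1, hy1]; exact compat_refl _
        · rw [hx1]
          exact ⟨split2 c (dseq c p b2), (split2_le c _).trans (IH b2 hb2).1, le_refl _⟩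
      · rcases Set.mem_insert_iff.1 hy with hy1 | ⟨⟨b2, hb2⟩, rfl⟩
        · rw [hy1]
          exact ⟨split2 c (dseq c p b1), le_refl _, (split2_le c _).trans (IH b1 hb1).1⟩
        · rcases lt_trichotomy b1 b2 with h | h | h
          · exact ⟨split2 c (dseq c p b2),
              ((split2_le c _).trans ((IH b2 hb2).2 b1 h)), le_refl _⟩
          · subst h; exact compat_refl _
          · exact ⟨split2 c (dseq c p b1), le_refl _,
              (split2_le c _).trans ((IH b1 hb1).2 b2 h)⟩
    exact ⟨hglb.1 (Set.mem_insert _ _),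
      fun b hb => hglb.1 (Set.mem_insert_of_mem _ ⟨⟨b, hb⟩, rfl⟩)⟩

noncomputable def eseq (c : Ctx κ P) (p : P) (a : κ.ord.ToType) : P :=
  split1 c (dseq c p a)

theorem eseq_le (c : Ctx κ P) (p : P) (a : κ.ord.ToType) : eseq c p a ≤ p :=
  (split1_le c _).trans (dseq_spec c p a).1

theorem eseq_incompat (c : Ctx κ P) (p : P) {a b : κ.ord.ToType} (hab : a ≠ b) :
    ¬ Compat (eseq c p a) (eseq c p b) := by
  have key : ∀ x y : κ.ord.ToType, x < y → ¬ Compat (eseq c p x) (eseq c p y) := by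
    intro x y hxy ⟨r, hr1, hr2⟩
    exact split_incompat c (dseq c p x)
      ⟨r, hr1, (hr2.trans (split1_le c _)).trans ((dseq_spec c p y).2 x hxy)⟩
  rcases hab.lt_or_gt with h | h
  · exact key _ _ h
  · intro hc
    exact key _ _ h ⟨hc.choose, hc.choose_spec.2, hc.choose_spec.1⟩

theorem eseq_inj (c : Ctx κ P) (p : P) : Function.Injective (eseq c p) := by
  intro a b hab
  by_contra hne
  exact eseq_incompat c p hne (hab ▸ compat_refl _)

theorem exists_children (c : Ctx κ P) (p t : P) :
    ∃ ch : κ.ord.ToType → P, (∀ i, ch i ≤ p) ∧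
      (∀ i j, i ≠ j → ¬ Compat (ch i) (ch j)) ∧
      (∀ r, r ≤ p → ∃ i, Compat r (ch i)) ∧
      (Compat p t → ∃ i, ch i ≤ t) := by
  classical
  -- common extension of p and t, or p itself
  set q₀ : P := if h : Compat p t then h.choose else p with hq₀
  have hq₀p : q₀ ≤ p := by
    rw [hq₀]; split
    · exact (‹Compat p t›).choose_spec.1
    · exact le_refl p
  have hq₀t : Compat p t → q₀ ≤ t := by
    intro h; rw [hq₀, dif_pos h]; exact h.choose_spec.2
  -- Zorn: maximal antichain below p containing the κ-antichain below q₀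
  set E : Set P := Set.range (eseq c q₀) with hE
  set Z : Set (Set P) := {A : Set P | E ⊆ A ∧ (∀ x ∈ A, x ≤ p) ∧
      A.Pairwise (fun x y => ¬ Compat x y)} with hZ
  have hEZ : E ∈ Z := by
    refine ⟨Set.Subset.rfl, ?_, ?_⟩
    · rintro x ⟨i, rfl⟩
      exact (eseq_le c q₀ i).trans hq₀p
    · rintro x ⟨i, rfl⟩ y ⟨j, rfl⟩ hxy
      exact eseq_incompat c q₀ (fun h => hxy (h ▸ rfl))
  obtain ⟨M, hEM, hMmax⟩ := zorn_subset_nonempty Z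
    (fun ch hch hchain hne => by
      refine ⟨⋃₀ ch, ⟨?_, ?_, ?_⟩, fun s hs => Set.subset_sUnion_of_mem hs⟩
      · obtain ⟨s, hs⟩ := hne
        exact (hch hs).1.trans (Set.subset_sUnion_of_mem hs)
      · rintro x ⟨s, hs, hx⟩
        exact (hch hs).2.1 x hx
      · rintro x ⟨s, hs, hx⟩ y ⟨u, hu, hy⟩ hxy
        rcases hchain.total hs hu with h | h
        · exact (hch hu).2.2 (h hx) hy hxy
        · exact (hch hs).2.2 hx (h hy) hxy)
    E hEZ
  have hM1 : ∀ x ∈ M, x ≤ p := hMmax.prop.2.1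
  have hM2 : M.Pairwise (fun x y => ¬ Compat x y) := hMmax.prop.2.2
  have hMpred : ∀ r, r ≤ p → ∃ x ∈ M, Compat r x := by
    intro r hr
    by_contra hcon
    push_neg at hcon
    have hrM : r ∉ M := fun hrm => (hcon r hrm) (compat_refl r)
    have hmem : insert r M ∈ Z := by
      refine ⟨hEM.trans (Set.subset_insert _ _), ?_, ?_⟩
      · rintro x hx
        rcases Set.mem_insert_iff.1 hx with rfl | hx
        · exact hr
        · exact hM1 x hx
      · rw [Set.pairwise_insert]
        refine ⟨hM2, fun b hb _ => ⟨hcon b hb, fun hcb => hcon b hb ?_⟩⟩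
        exact ⟨hcb.choose, hcb.choose_spec.2, hcb.choose_spec.1⟩
    exact hrM (hMmax.2 hmem (Set.subset_insert r M) (Set.mem_insert r M))
  have hcardE : #E = κ := by
    rw [hE, Cardinal.mk_range_eq _ (eseq_inj c q₀), mk_B c]
  have hcardM : #M = κ := by
    refine le_antisymm (le_of_le_of_eq (Cardinal.mk_set_le M) c.hcard) ?_
    rw [← hcardE]
    exact Cardinal.mk_le_mk_of_subset hEM
  obtain ⟨e⟩ : Nonempty (κ.ord.ToType ≃ M) := Cardinal.eq.mp (by rw [hcardM, mk_B c])
  refine ⟨fun i => (e i : P), fun i => hM1 _ (e i).2, ?_, ?_, ?_⟩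
  · intro i j hij
    exact hM2 (e i).2 (e j).2 (fun h => hij (e.injective (Subtype.ext h)))
  · intro r hr
    obtain ⟨x, hx, hcx⟩ := hMpred r hr
    refine ⟨e.symm ⟨x, hx⟩, ?_⟩
    show Compat r ((e (e.symm ⟨x, hx⟩) : P))
    rw [Equiv.apply_symm_apply]
    exact hcx
  · intro hpt
    have i₀ : κ.ord.ToType := Classical.choice (nonemptyB c)
    have hmem : eseq c q₀ i₀ ∈ M := hEM ⟨i₀, rfl⟩
    refine ⟨e.symm ⟨eseq c q₀ i₀, hmem⟩, ?_⟩
    show ((e (e.symm ⟨eseq c q₀ i₀, hmem⟩) : P)) ≤ t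
    rw [Equiv.apply_symm_apply]
    exact (eseq_le c q₀ i₀).trans (hq₀t hpt)


noncomputable def child (c : Ctx κ P) (p t : P) : κ.ord.ToType → P :=
  (exists_children c p t).choose

theorem child_le (c : Ctx κ P) (p t : P) (i : κ.ord.ToType) : child c p t i ≤ p :=
  (exists_children c p t).choose_spec.1 i

theorem child_incompat (c : Ctx κ P) (p t : P) {i j : κ.ord.ToType} (h : i ≠ j) :
    ¬ Compat (child c p t i) (child c p t j) :=
  (exists_children c p t).choose_spec.2.1 i j h

theorem child_predense (c : Ctx κ P) (p t : P) {r : P} (h : r ≤ p) :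
    ∃ i, Compat r (child c p t i) :=
  (exists_children c p t).choose_spec.2.2.1 r h

theorem child_hits (c : Ctx κ P) (p t : P) (h : Compat p t) : ∃ i, child c p t i ≤ t :=
  (exists_children c p t).choose_spec.2.2.2 h

theorem mk_range_small (c : Ctx κ P) {a : κ.ord.ToType}
    (f : {x : κ.ord.ToType // x < a} → P) : #(Set.range f : Set P) < κ :=
  lt_of_le_of_lt Cardinal.mk_range_le (mk_Iio_lt c a)

noncomputable def eqvP (c : Ctx κ P) : κ.ord.ToType ≃ P :=
  Classical.choice (Cardinal.eq.mp (by rw [mk_B c, c.hcard]))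

/-- The main recursion: `F c σ a` is the condition attached to the node `σ ↾ a`. -/
noncomputable def F (c : Ctx κ P) (σ : κ.ord.ToType → κ.ord.ToType) : κ.ord.ToType → P :=
  WellFounded.fix wellFounded_lt (fun a IH =>
    glbS c (Set.range (fun b : {x // x < a} => child c (IH b.1 b.2) (eqvP c b.1) (σ b.1))))

/-- The chosen child of node `σ ↾ b` in direction `σ b`. -/
noncomputable def Stp (c : Ctx κ P) (σ : κ.ord.ToType → κ.ord.ToType) (b : κ.ord.ToType) : P :=
  child c (F c σ b) (eqvP c b) (σ b)

theorem F_eq (c : Ctx κ P) (σ : κ.ord.ToType → κ.ord.ToType) (a : κ.ord.ToType) :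
    F c σ a = glbS c (Set.range (fun b : {x // x < a} => Stp c σ b.1)) :=
  WellFounded.fix_eq _ _ _

theorem stp_le (c : Ctx κ P) (σ : κ.ord.ToType → κ.ord.ToType) (b : κ.ord.ToType) :
    Stp c σ b ≤ F c σ b := child_le _ _ _ _

theorem F_isGLB (c : Ctx κ P) (σ : κ.ord.ToType → κ.ord.ToType) :
    ∀ a, IsGLB (Set.range (fun b : {x // x < a} => Stp c σ b.1)) (F c σ a) := by
  intro a
  induction a using WellFoundedLT.induction with
  | _ a IH =>
    rw [F_eq]
    apply glbS_spec c (mk_range_small c _)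
    rintro x ⟨⟨b1, hb1⟩, rfl⟩ y ⟨⟨b2, hb2⟩, rfl⟩
    rcases lt_trichotomy b1 b2 with h | h | h
    · exact ⟨Stp c σ b2, (stp_le c σ b2).trans ((IH b2 hb2).1 ⟨⟨b1, h⟩, rfl⟩), le_refl _⟩
    · subst h; exact compat_refl _
    · exact ⟨Stp c σ b1, le_refl _, (stp_le c σ b1).trans ((IH b1 hb1).1 ⟨⟨b2, h⟩, rfl⟩)⟩

theorem F_le_stp (c : Ctx κ P) (σ : κ.ord.ToType → κ.ord.ToType) {a b : κ.ord.ToType}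
    (h : b < a) : F c σ a ≤ Stp c σ b :=
  (F_isGLB c σ a).1 ⟨⟨b, h⟩, rfl⟩

theorem F_mono (c : Ctx κ P) (σ : κ.ord.ToType → κ.ord.ToType) {a b : κ.ord.ToType}
    (h : b ≤ a) : F c σ a ≤ F c σ b := by
  apply (F_isGLB c σ b).2
  rintro x ⟨⟨b', hb'⟩, rfl⟩
  exact F_le_stp c σ (lt_of_lt_of_le hb' h)

theorem F_congr (c : Ctx κ P) {σ τ : κ.ord.ToType → κ.ord.ToType} :
    ∀ a, (∀ x, x < a → σ x = τ x) → F c σ a = F c τ a := by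
  intro a
  induction a using WellFoundedLT.induction with
  | _ a IH =>
    intro hagree
    rw [F_eq c σ, F_eq c τ]
    congr 1
    apply congrArg
    funext b
    show Stp c σ b.1 = Stp c τ b.1
    rw [Stp, Stp, IH b.1 b.2 (fun x hx => hagree x (hx.trans b.2)), hagree b.1 b.2]

theorem F_incompat (c : Ctx κ P) {σ τ : κ.ord.ToType → κ.ord.ToType}
    {a a' b : κ.ord.ToType} (hba : b < a) (hba' : b < a')
    (hagree : ∀ x, x < b → σ x = τ x) (hne : σ b ≠ τ b) :
    ¬ Compat (F c σ a) (F c τ a') := by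
  rintro ⟨r, hr1, hr2⟩
  apply child_incompat c (F c σ b) (eqvP c b) hne
  refine ⟨r, hr1.trans (F_le_stp c σ hba), ?_⟩
  have h2 := hr2.trans (F_le_stp c τ hba')
  rwa [Stp, F_congr c b (fun x hx => (hagree x hx).symm)] at h2

theorem F_not_le (c : Ctx κ P) (σ : κ.ord.ToType → κ.ord.ToType) {a b : κ.ord.ToType}
    (h : b < a) : ¬ (F c σ b ≤ F c σ a) := by
  intro hle
  haveI := nontrivialB c
  obtain ⟨j, hj⟩ := exists_ne (σ b)
  classical
  set τ := Function.update σ b j with hτ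
  have hagree : ∀ x, x < b → τ x = σ x := fun x hx =>
    Function.update_of_ne (ne_of_lt hx) _ _
  have hne : σ b ≠ τ b := by
    rw [hτ, Function.update_self]
    exact fun hh => hj hh.symm
  refine F_incompat c (a := a) (a' := a) h h (fun x hx => (hagree x hx).symm) hne
    ⟨F c τ a, ?_, le_refl _⟩
  calc F c τ a ≤ F c τ b := F_mono c τ h.le
    _ = F c σ b := F_congr c b hagree
    _ ≤ F c σ a := hle

theorem F_le_iff (c : Ctx κ P) (σ τ : κ.ord.ToType → κ.ord.ToType) (a b : κ.ord.ToType) :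
    F c σ a ≤ F c τ b ↔ (b ≤ a ∧ ∀ x, x < b → σ x = τ x) := by
  constructor
  · intro h
    have hagree : ∀ x, x < a → x < b → σ x = τ x := by
      by_contra hcon
      push_neg at hcon
      obtain ⟨x₀, hx₀, hmin⟩ := wellFounded_lt.has_min
        {x : κ.ord.ToType | x < a ∧ x < b ∧ σ x ≠ τ x}
        (by obtain ⟨x, h1, h2, h3⟩ := hcon; exact ⟨x, h1, h2, h3⟩)
      have hagr : ∀ y, y < x₀ → σ y = τ y := by
        intro y hy
        by_contra hne
        exact hmin y ⟨hy.trans hx₀.1, hy.trans hx₀.2.1, hne⟩ hy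
      exact F_incompat c hx₀.1 hx₀.2.1 hagr hx₀.2.2 ⟨F c σ a, le_refl _, h⟩
    have hba : b ≤ a := by
      by_contra hab
      push_neg at hab
      have hagree' : ∀ x, x < a → σ x = τ x := fun x hx => hagree x hx (hx.trans hab)
      apply F_not_le c τ hab
      rwa [F_congr c a hagree'] at h
    exact ⟨hba, fun x hx => hagree x (hx.trans_le hba) hx⟩
  · rintro ⟨hba, hagree⟩
    exact (F_mono c σ hba).trans (le_of_eq (F_congr c b hagree))

open scoped Classical in
/-- Body of the branch recursion used for density. -/
noncomputable def Kbody (c : Ctx κ P) (p : P) (a : κ.ord.ToType)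
    (IH : ∀ b, b < a → κ.ord.ToType × P) : κ.ord.ToType × P :=
  if h : ∃ i, ∃ r' : P,
      r' ≤ glbS c (insert p (Set.range (fun b : {x // x < a} => (IH b.1 b.2).2))) ∧
      r' ≤ child c
        (F c (fun b => if hb : b < a then (IH b hb).1 else Classical.choice (nonemptyB c)) a)
        (eqvP c a) i
  then (h.choose, h.choose_spec.choose)
  else (Classical.choice (nonemptyB c), p)

noncomputable def K (c : Ctx κ P) (p : P) : κ.ord.ToType → κ.ord.ToType × P :=
  WellFounded.fix wellFounded_lt (Kbody c p)

theorem K_eq (c : Ctx κ P) (p : P) (a : κ.ord.ToType) :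
    K c p a = Kbody c p a (fun b _ => K c p b) :=
  WellFounded.fix_eq _ _ _

noncomputable def path (c : Ctx κ P) (p : P) (b : κ.ord.ToType) : κ.ord.ToType :=
  (K c p b).1

noncomputable def wit (c : Ctx κ P) (p : P) (b : κ.ord.ToType) : P := (K c p b).2

theorem K_spec (c : Ctx κ P) (p : P) : ∀ a,
    wit c p a ≤ p ∧
    wit c p a ≤ child c (F c (path c p) a) (eqvP c a) (path c p a) ∧
    ∀ b, b < a → wit c p a ≤ wit c p b := by
  intro a
  induction a using WellFoundedLT.induction with
  | _ a IH =>
    have hσ : F c (fun b => if hb : b < a then (K c p b).1 else Classical.choice (nonemptyB c)) a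
        = F c (path c p) a := F_congr c a (fun x hx => by rw [dif_pos hx]; rfl)
    set S := insert p (Set.range (fun b : {x // x < a} => (K c p b).2)) with hS
    have hglb : IsGLB S (glbS c S) := by
      apply glbS_spec c (mk_small c _ p)
      rintro x hx y hy
      rcases Set.mem_insert_iff.1 hx with hx1 | ⟨⟨b1, hb1⟩, rfl⟩
      · rcases Set.mem_insert_iff.1 hy with hy1 | ⟨⟨b2, hb2⟩, rfl⟩
        · rw [hx1, hy1]; exact compat_refl _
        · rw [hx1]; exact ⟨(K c p b2).2, (IH b2 hb2).1, le_refl _⟩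
      · rcases Set.mem_insert_iff.1 hy with hy1 | ⟨⟨b2, hb2⟩, rfl⟩
        · rw [hy1]; exact ⟨(K c p b1).2, le_refl _, (IH b1 hb1).1⟩
        · rcases lt_trichotomy b1 b2 with h | h | h
          · exact ⟨(K c p b2).2, (IH b2 hb2).2.2 b1 h, le_refl _⟩
          · subst h; exact compat_refl _
          · exact ⟨(K c p b1).2, le_refl _, (IH b1 hb1).2.2 b2 h⟩
    have hrp : glbS c S ≤ p := hglb.1 (Set.mem_insert _ _)
    have hrw : ∀ b, b < a → glbS c S ≤ (K c p b).2 := fun b hb =>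
      hglb.1 (Set.mem_insert_of_mem _ ⟨⟨b, hb⟩, rfl⟩)
    have hrnode : glbS c S ≤ F c (path c p) a := by
      apply (F_isGLB c (path c p) a).2
      rintro x ⟨⟨b, hb⟩, rfl⟩
      exact (hrw b hb).trans (IH b hb).2.1
    have hex : ∃ i, ∃ r' : P,
        r' ≤ glbS c (insert p (Set.range (fun b : {x // x < a} => (K c p b.1).2))) ∧
        r' ≤ child c
          (F c (fun b => if hb : b < a then (K c p b).1 else Classical.choice (nonemptyB c)) a)
          (eqvP c a) i := by
      obtain ⟨i, r', hr1, hr2⟩ := child_predense c (F c (path c p) a) (eqvP c a) hrnode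
      exact ⟨i, r', hr1, by rw [hσ]; exact hr2⟩
    have hK : K c p a = (hex.choose, hex.choose_spec.choose) := by
      rw [K_eq]
      unfold Kbody
      rw [dif_pos hex]
    have hw : wit c p a = hex.choose_spec.choose := by rw [wit, hK]
    have hpa : path c p a = hex.choose := by rw [path, hK]
    have hsp := hex.choose_spec.choose_spec
    refine ⟨?_, ?_, ?_⟩
    · rw [hw]; exact hsp.1.trans hrp
    · rw [hw, hpa]
      rw [← hσ]
      exact hsp.2
    · intro b hb
      rw [hw]
      exact hsp.1.trans (hrw b hb)

theorem F_dense (c : Ctx κ P) (p : P) : ∃ σ a, F c σ a ≤ p := by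
  classical
  set α := (eqvP c).symm p with hα
  have hp : eqvP c α = p := Equiv.apply_symm_apply _ _
  obtain ⟨h1, h2, -⟩ := K_spec c p α
  have hcompat : Compat (F c (path c p) α) (eqvP c α) :=
    ⟨wit c p α, h2.trans (child_le _ _ _ _), hp ▸ h1⟩
  obtain ⟨i, hi⟩ := child_hits c _ _ hcompat
  haveI : NoMaxOrder κ.ord.ToType := Cardinal.noMaxOrder c.hκ
  obtain ⟨a', ha'⟩ := exists_gt α
  refine ⟨Function.update (path c p) α i, a', ?_⟩
  have hle : F c (Function.update (path c p) α i) a' ≤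
      Stp c (Function.update (path c p) α i) α := F_le_stp c _ ha'
  rw [Stp, Function.update_self,
    F_congr c α (fun x hx => Function.update_of_ne (ne_of_lt hx) _ _)] at hle
  exact hle.trans (hi.trans (le_of_eq hp))

noncomputable def len (s : KTree κ) : κ.ord.ToType := s.2.choose

theorem len_spec (s : KTree κ) : ∀ x, (s.1 x).isSome ↔ x < len s := s.2.choose_spec

theorem len_unique {s : KTree κ} {a : κ.ord.ToType} (h : ∀ x, (s.1 x).isSome ↔ x < a) :
    len s = a := by
  by_contra hne
  rcases lt_or_gt_of_ne hne with hlt | hlt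
  · exact absurd ((h (len s)).2 hlt) (fun hs => lt_irrefl _ ((len_spec s (len s)).1 hs))
  · exact absurd ((len_spec s a).2 hlt) (fun hs => lt_irrefl _ ((h a).1 hs))

noncomputable def dec (c : Ctx κ P) (s : KTree κ) : κ.ord.ToType → κ.ord.ToType :=
  fun x => (s.1 x).getD (Classical.choice (nonemptyB c))

noncomputable def fmap (c : Ctx κ P) (s : KTree κ) : P := F c (dec c s) (len s)

open scoped Classical in
noncomputable def enc (σ : κ.ord.ToType → κ.ord.ToType) (a : κ.ord.ToType) : KTree κ :=
  ⟨fun x => if x < a then some (σ x) else none, a, fun x => by by_cases h : x < a <;> simp [h]⟩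

theorem len_enc (σ : κ.ord.ToType → κ.ord.ToType) (a : κ.ord.ToType) :
    len (enc σ a : KTree κ) = a :=
  len_unique (fun x => by by_cases h : x < a <;> simp [enc, h])

theorem fmap_enc (c : Ctx κ P) (σ : κ.ord.ToType → κ.ord.ToType) (a : κ.ord.ToType) :
    fmap c (enc σ a) = F c σ a := by
  rw [fmap, len_enc]
  exact F_congr c a (fun x hx => by simp [dec, enc, if_pos hx])

theorem opt_eq {α : Type*} {o : Option α} (h : o.isSome) (d : α) : o = some (o.getD d) := by
  cases o
  · simp at h
  · rfl

theorem ktreele_iff (c : Ctx κ P) (s t : KTree κ) :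
    KTreeLe s t ↔ (len t ≤ len s ∧ ∀ x, x < len t → dec c s x = dec c t x) := by
  constructor
  · intro h
    constructor
    · by_contra hlt
      push_neg at hlt
      have ht : (t.1 (len s)).isSome := (len_spec t _).2 hlt
      have hs : (s.1 (len s)).isSome := by rw [h _ ht]; exact ht
      exact lt_irrefl _ ((len_spec s _).1 hs)
    · intro x hx
      rw [dec, dec, h x ((len_spec t x).2 hx)]
  · rintro ⟨hle, hagr⟩ x hx
    have hxt : x < len t := (len_spec t x).1 hx
    have hs : (s.1 x).isSome := (len_spec s x).2 (hxt.trans_le hle)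
    rw [opt_eq hs (Classical.choice (nonemptyB c)), opt_eq hx (Classical.choice (nonemptyB c))]
    exact congrArg _ (hagr x hxt)

theorem fmap_le_iff (c : Ctx κ P) (s t : KTree κ) :
    fmap c s ≤ fmap c t ↔ KTreeLe s t := by
  rw [fmap, fmap, F_le_iff, ktreele_iff c]

theorem ktree_ext {s t : KTree κ} (h1 : KTreeLe s t) (h2 : KTreeLe t s) : s = t := by
  refine Subtype.ext (funext fun x => ?_)
  by_cases ht : (t.1 x).isSome
  · exact h1 x ht
  · by_cases hs : (s.1 x).isSome
    · exact (h2 x hs).symm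
    · rw [Option.not_isSome_iff_eq_none] at hs ht
      rw [hs, ht]

theorem fmap_inj (c : Ctx κ P) : Function.Injective (fmap c) := by
  intro s t h
  exact ktree_ext ((fmap_le_iff c s t).1 h.le) ((fmap_le_iff c t s).1 h.ge)


end KTAux

/-- Let `κ` be infinite with `κ^{<κ} = κ`. Every atomless separative `κ`-lattice
partial order of size `κ` in which every decreasing sequence of length `< κ` has a
greatest lower bound contains a dense subset order-isomorphic to the tree `κ^{<κ}`
ordered by reverse extension (hence is forcing-equivalent to `Add(κ,1)`). -/
theorem dense_subset_iso_kTree (κ : Cardinal) (hκ : ℵ₀ ≤ κ) (hpow : κ ^< κ = κ)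
    (P : Type) [PartialOrder P] (hcard : #P = κ)
    -- `κ`-lattice
    (hlat : ∀ S : Set P, #S < κ → (∀ p ∈ S, ∀ q ∈ S, Compat p q) → ∃ g : P, IsGLB S g)
    -- every decreasing sequence of length `< κ` has a greatest lower bound
    (hseq : ∀ (ι : Type) (_ : LinearOrder ι), #ι < κ →
      ∀ q : ι → P, Antitone q → ∃ g : P, IsGLB (Set.range q) g)
    -- atomless: every condition has two incompatible extensions
    (hatomless : ∀ p : P, ∃ q r : P, q ≤ p ∧ r ≤ p ∧ ¬ Compat q r)
    -- separative
    (hsep : ∀ p q : P, ¬ p ≤ q → ∃ r : P, r ≤ p ∧ ¬ Compat r q) :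
    ∃ D : Set P, (∀ p : P, ∃ q ∈ D, q ≤ p) ∧
      ∃ e : D ≃ KTree κ, ∀ x y : D, (x : P) ≤ (y : P) ↔ KTreeLe (e x) (e y) := by
  have c : KTAux.Ctx κ P := ⟨hκ, hcard, hlat, hatomless⟩
  have hinj := KTAux.fmap_inj c
  refine ⟨Set.range (KTAux.fmap c), ?_, (Equiv.ofInjective _ hinj).symm, ?_⟩
  · intro p
    obtain ⟨σ, a, hle⟩ := KTAux.F_dense c p
    exact ⟨KTAux.fmap c (KTAux.enc σ a), ⟨_, rfl⟩, by rw [KTAux.fmap_enc]; exact hle⟩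
  · intro x y
    have hx : KTAux.fmap c ((Equiv.ofInjective _ hinj).symm x) = x :=
      Equiv.apply_ofInjective_symm hinj x
    have hy : KTAux.fmap c ((Equiv.ofInjective _ hinj).symm y) = y :=
      Equiv.apply_ofInjective_symm hinj y
    rw [← KTAux.fmap_le_iff c, hx, hy]
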